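/- Let U_0, …, U_d denote any one of the six decompositions [0D], [0*D*], [0*D], [0*0], [D*0], [D*D] of V. Then for 0 ≤ i ≤ d the actions of K and K^{−1} on U_i satisfy: for [0D]: (K − q^{2i−d}I)U_i ⊆ U_{i+1} + ⋯ + U_d and (K^{−1} − q^{d−2i}I)U_i ⊆ U_{i+1}; for [0*D*]: (K − q^{2i−d}I)U_i ⊆ U_{i−1} and (K^{−1} − q^{d−2i}I)U_i ⊆ U_0 + ⋯ + U_{i−1}; for [0*D]: (K − q^{2i−d}I)U_i = 0 and (K^{−1} − q^{d−2i}I)U_i = 0; for [0*0]: (K − q^{2i−d}I)U_i ⊆ U_0 + ⋯ + U_{i−1} and (K^{−1} − q^{d−2i}I)U_i ⊆ U_{i−1}; for [D*0]: KU_i ⊆ U_0 + ⋯ + U_{i+1} and K^{−1}U_i ⊆ U_{i−1} + ⋯ + U_d; for [D*D]: (K − q^{2i−d}I)U_i ⊆ U_{i+1} and (K^{−1} − q^{d−2i}I)U_i ⊆ U_{i+1} + ⋯ + U_d. -/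

import Mathlib

noncomputable section

open Submodule

variable {K : Type*} [Field K]

/-- `[n]_q = (q^n − q^{−n})/(q − q^{−1})`. -/
def qInt (q : K) (n : ℤ) : K := (q ^ n - q ^ (-n)) / (q - q⁻¹)

/-- Elements `y₀⁺, y₁⁺, y₀⁻, y₁⁻, k₀, k₀⁻¹, k₁, k₁⁻¹` of a unital associative `K`-algebra
satisfy the alternate relations. -/
structure AlternateRelations (q : K) {A : Type*} [Ring A] [Algebra K A]
    (yp ym k kinv : Fin 2 → A) : Prop where
  k_kinv : ∀ i, k i * kinv i = 1
  kinv_k : ∀ i, kinv i * k i = 1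
  central_yp : ∀ i, k 0 * k 1 * yp i = yp i * (k 0 * k 1)
  central_ym : ∀ i, k 0 * k 1 * ym i = ym i * (k 0 * k 1)
  central_k : ∀ i, k 0 * k 1 * k i = k i * (k 0 * k 1)
  central_kinv : ∀ i, k 0 * k 1 * kinv i = kinv i * (k 0 * k 1)
  rel_yp_k : ∀ i, (q - q⁻¹)⁻¹ • (q • (yp i * k i) - q⁻¹ • (k i * yp i)) = 1
  rel_k_ym : ∀ i, (q - q⁻¹)⁻¹ • (q • (k i * ym i) - q⁻¹ • (ym i * k i)) = 1
  rel_ym_yp : ∀ i, (q - q⁻¹)⁻¹ • (q • (ym i * yp i) - q⁻¹ • (yp i * ym i)) = 1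
  rel_yp_ym : ∀ i j, i ≠ j →
    (q - q⁻¹)⁻¹ • (q • (yp i * ym j) - q⁻¹ • (ym j * yp i)) = kinv 0 * kinv 1
  serre_p : ∀ i j, i ≠ j →
    yp i ^ 3 * yp j - qInt q 3 • (yp i ^ 2 * yp j * yp i)
      + qInt q 3 • (yp i * yp j * yp i ^ 2) - yp j * yp i ^ 3 = 0
  serre_m : ∀ i j, i ≠ j →
    ym i ^ 3 * ym j - qInt q 3 • (ym i ^ 2 * ym j * ym i)
      + qInt q 3 • (ym i * ym j * ym i ^ 2) - ym j * ym i ^ 3 = 0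

/-- Elements `e₀⁺, e₁⁺, e₀⁻, e₁⁻, K₀, K₀⁻¹, K₁, K₁⁻¹` of a unital associative `K`-algebra
satisfy the Chevalley relations of `U_q(sl₂ hat)`. -/
structure ChevalleyRelations (q : K) {A : Type*} [Ring A] [Algebra K A]
    (ep em Kg Kginv : Fin 2 → A) : Prop where
  K_Kinv : ∀ i, Kg i * Kginv i = 1
  Kinv_K : ∀ i, Kginv i * Kg i = 1
  K_comm : Kg 0 * Kg 1 = Kg 1 * Kg 0
  KepK_same : ∀ i, Kg i * ep i * Kginv i = (q ^ (2 : ℤ)) • ep i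
  KemK_same : ∀ i, Kg i * em i * Kginv i = (q ^ (-2 : ℤ)) • em i
  KepK_diff : ∀ i j, i ≠ j → Kg i * ep j * Kginv i = (q ^ (-2 : ℤ)) • ep j
  KemK_diff : ∀ i j, i ≠ j → Kg i * em j * Kginv i = (q ^ (2 : ℤ)) • em j
  e_comm_same : ∀ i, ep i * em i - em i * ep i = (q - q⁻¹)⁻¹ • (Kg i - Kginv i)
  e_comm_diff : ∀ i j, i ≠ j → ep i * em j = em j * ep i
  serre_p : ∀ i j, i ≠ j →
    ep i ^ 3 * ep j - qInt q 3 • (ep i ^ 2 * ep j * ep i)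
      + qInt q 3 • (ep i * ep j * ep i ^ 2) - ep j * ep i ^ 3 = 0
  serre_m : ∀ i j, i ≠ j →
    em i ^ 3 * em j - qInt q 3 • (em i ^ 2 * em j * em i)
      + qInt q 3 • (em i * em j * em i ^ 2) - em j * em i ^ 3 = 0

variable {V : Type*} [AddCommGroup V] [Module K V]

/-- A decomposition of `V` of length `d`: nonzero subspaces `U 0, …, U d`
(indexed by `ℤ`, with `U i = ⊥` outside `[0, d]`) whose direct sum is `V`. -/
structure IsDecomposition (d : ℕ) (U : ℤ → Submodule K V) : Prop where
  bot_of_lt : ∀ i : ℤ, i < 0 → U i = ⊥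
  bot_of_gt : ∀ i : ℤ, (d : ℤ) < i → U i = ⊥
  ne_bot : ∀ i : ℤ, 0 ≤ i → i ≤ (d : ℤ) → U i ≠ ⊥
  indep : iSupIndep U
  sup_eq_top : ⨆ i, U i = ⊤

/-- `A, A*` is a tridiagonal pair on `V` with standard orderings `Vs 0, …, Vs d` and
`Vs' 0, …, Vs' d` of the eigenspaces of `A` resp. `A*`, with corresponding eigenvalues
`θ i` resp. `θ' i`. -/
structure IsTridiagonalPair (A A' : Module.End K V) (d : ℕ)
    (Vs Vs' : ℤ → Submodule K V) (θ θ' : ℤ → K) : Prop where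
  decompV : IsDecomposition d Vs
  decompV' : IsDecomposition d Vs'
  eig : ∀ i : ℤ, ∀ v ∈ Vs i, A v = θ i • v
  eig' : ∀ i : ℤ, ∀ v ∈ Vs' i, A' v = θ' i • v
  theta_inj : ∀ i j : ℤ, 0 ≤ i → i ≤ (d : ℤ) → 0 ≤ j → j ≤ (d : ℤ) → θ i = θ j → i = j
  theta'_inj : ∀ i j : ℤ, 0 ≤ i → i ≤ (d : ℤ) → 0 ≤ j → j ≤ (d : ℤ) → θ' i = θ' j → i = j
  trid : ∀ i : ℤ, (Vs i).map A' ≤ Vs (i - 1) ⊔ Vs i ⊔ Vs (i + 1)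
  trid' : ∀ i : ℤ, (Vs' i).map A ≤ Vs' (i - 1) ⊔ Vs' i ⊔ Vs' (i + 1)
  irred : ∀ W : Submodule K V, W.map A ≤ W → W.map A' ≤ W → W = ⊥ ∨ W = ⊤

/-- The sum `U m + U (m+1) + ⋯ + U n`. -/
def sumIcc (U : ℤ → Submodule K V) (m n : ℤ) : Submodule K V :=
  ⨆ j ∈ Set.Icc m n, U j

/-- Decomposition `[0D]`: the `i`-th subspace is `V_i`. -/
def dec0D (Vs : ℤ → Submodule K V) : ℤ → Submodule K V := Vs

/-- Decomposition `[0*D*]`: the `i`-th subspace is `V*_i`. -/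
def dec0sDs (Vs' : ℤ → Submodule K V) : ℤ → Submodule K V := Vs'

/-- Decomposition `[0*D]`: the `i`-th subspace is `(V*_0+⋯+V*_i) ∩ (V_i+⋯+V_d)`. -/
def dec0sD (d : ℕ) (Vs Vs' : ℤ → Submodule K V) (i : ℤ) : Submodule K V :=
  sumIcc Vs' 0 i ⊓ sumIcc Vs i (d : ℤ)

/-- Decomposition `[0*0]`: the `i`-th subspace is `(V*_0+⋯+V*_i) ∩ (V_0+⋯+V_{d−i})`. -/
def dec0s0 (d : ℕ) (Vs Vs' : ℤ → Submodule K V) (i : ℤ) : Submodule K V :=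
  sumIcc Vs' 0 i ⊓ sumIcc Vs 0 ((d : ℤ) - i)

/-- Decomposition `[D*0]`: the `i`-th subspace is `(V*_{d−i}+⋯+V*_d) ∩ (V_0+⋯+V_{d−i})`. -/
def decDs0 (d : ℕ) (Vs Vs' : ℤ → Submodule K V) (i : ℤ) : Submodule K V :=
  sumIcc Vs' ((d : ℤ) - i) (d : ℤ) ⊓ sumIcc Vs 0 ((d : ℤ) - i)

/-- Decomposition `[D*D]`: the `i`-th subspace is `(V*_{d−i}+⋯+V*_d) ∩ (V_i+⋯+V_d)`. -/
def decDsD (d : ℕ) (Vs Vs' : ℤ → Submodule K V) (i : ℤ) : Submodule K V :=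
  sumIcc Vs' ((d : ℤ) - i) (d : ℤ) ⊓ sumIcc Vs i (d : ℤ)


/-! ### Auxiliary lemmas -/

section Aux

variable {K : Type*} [Field K] {V : Type*} [AddCommGroup V] [Module K V]

lemma le_sumIcc {U : ℤ → Submodule K V} {m n j : ℤ} (h1 : m ≤ j) (h2 : j ≤ n) :
    U j ≤ sumIcc U m n :=
  le_iSup₂ (f := fun j _ => U j) j ⟨h1, h2⟩

lemma sumIcc_le {U : ℤ → Submodule K V} {m n : ℤ} {W : Submodule K V}
    (h : ∀ j, m ≤ j → j ≤ n → U j ≤ W) : sumIcc U m n ≤ W :=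
  iSup₂_le fun j hj => h j hj.1 hj.2

lemma sumIcc_apply_le {U : ℤ → Submodule K V} {m n : ℤ} {W : Submodule K V}
    (f : Module.End K V) (h : ∀ j, m ≤ j → j ≤ n → ∀ v ∈ U j, f v ∈ W) :
    ∀ v ∈ sumIcc U m n, f v ∈ W := fun v hv =>
  sumIcc_le (W := W.comap f) (fun j h1 h2 x hx => h j h1 h2 x hx) hv

lemma sumIcc_bot {U : ℤ → Submodule K V} {m n : ℤ} (h : n < m) : sumIcc U m n = ⊥ :=
  le_bot_iff.1 (sumIcc_le fun _ h1 h2 => absurd (h1.trans h2) (by omega))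

lemma sumIcc_mono_idx {U : ℤ → Submodule K V} {m n m' n' : ℤ} (h1 : m' ≤ m) (h2 : n ≤ n') :
    sumIcc U m n ≤ sumIcc U m' n' :=
  sumIcc_le fun _ hj1 hj2 => le_sumIcc (h1.trans hj1) (hj2.trans h2)

lemma sumIcc_congr_idx {U : ℤ → Submodule K V} {m n m' n' : ℤ} (h1 : m = m') (h2 : n = n') :
    sumIcc U m n = sumIcc U m' n' := by rw [h1, h2]

lemma sumIcc_split {U : ℤ → Submodule K V} {m n : ℤ} (k : ℤ) :
    sumIcc U m n ≤ sumIcc U m k ⊔ sumIcc U (k + 1) n :=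
  sumIcc_le fun j h1 h2 => by
    rcases le_or_gt j k with h | h
    · exact (le_sumIcc h1 h).trans le_sup_left
    · exact (le_sumIcc (by omega) h2).trans le_sup_right

lemma sumIcc_rev {U : ℤ → Submodule K V} {c m n : ℤ} :
    sumIcc (fun j => U (c - j)) m n = sumIcc U (c - n) (c - m) := by
  apply le_antisymm
  · exact sumIcc_le fun j h1 h2 => le_sumIcc (U := U) (by omega) (by omega)
  · refine sumIcc_le fun j h1 h2 => ?_
    have h3 : U j = (fun j => U (c - j)) (c - j) := by
      simp only [sub_sub_cancel]
    rw [h3]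
    exact le_sumIcc (U := fun j => U (c - j)) (by omega) (by omega)

lemma end_sub_smul_one_apply (f : Module.End K V) (c : K) (v : V) :
    (f - c • (1 : Module.End K V)) v = f v - c • v := by
  simp [LinearMap.sub_apply, LinearMap.smul_apply, Module.End.one_apply]

namespace IsDecomposition

variable {d : ℕ} {U : ℤ → Submodule K V}

lemma top_le_sumIcc (hD : IsDecomposition d U) {m n : ℤ} (h1 : m ≤ 0) (h2 : (d : ℤ) ≤ n) :
    ⊤ ≤ sumIcc U m n := by
  rw [← hD.sup_eq_top]
  refine iSup_le fun j => ?_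
  rcases lt_or_ge j 0 with h | h
  · rw [hD.bot_of_lt j h]; exact bot_le
  rcases le_or_gt j (d : ℤ) with h' | h'
  · exact le_sumIcc (by omega) (by omega)
  · rw [hD.bot_of_gt j h']; exact bot_le

lemma sum_eq_zero (hD : IsDecomposition d U) (f : ℤ → V) :
    ∀ (s : Finset ℤ), (∀ j ∈ s, f j ∈ U j) → ∑ j ∈ s, f j = 0 → ∀ j ∈ s, f j = 0 := by
  classical
  intro s
  induction s using Finset.induction_on with
  | empty => intro _ _ j hj; simp at hj
  | insert k s hk ih =>
    intro hf h
    rw [Finset.sum_insert hk] at h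
    have hk0 : f k = 0 := by
      have hmem : f k ∈ U k ⊓ (⨆ j, ⨆ (_ : j ≠ k), U j) := by
        refine ⟨hf k (Finset.mem_insert_self k s), ?_⟩
        have he : f k = -∑ j ∈ s, f j := eq_neg_of_add_eq_zero_left h
        rw [he]
        refine neg_mem (Submodule.sum_mem _ fun j hj => ?_)
        exact le_iSup₂ (f := fun j _ => U j) j (by rintro rfl; exact hk hj)
          (hf j (Finset.mem_insert_of_mem hj))
      have := (iSupIndep_def.mp hD.indep k).le_bot hmem
      simpa using this
    intro j hj
    rcases Finset.mem_insert.mp hj with rfl | hj'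
    · exact hk0
    · exact ih (fun j' hj' => hf j' (Finset.mem_insert_of_mem hj'))
        (by rwa [hk0, zero_add] at h) j hj'

lemma eig_mem (hD : IsDecomposition d U) {A : Module.End K V} {θ : ℤ → K}
    (heig : ∀ i : ℤ, ∀ v ∈ U i, A v = θ i • v) {μ : K} {w : V} (hw : A w = μ • w)
    (m : ℤ) (hm : ∀ j : ℤ, 0 ≤ j → j ≤ (d : ℤ) → j ≠ m → θ j ≠ μ) : w ∈ U m := by
  classical
  have hwtop : w ∈ ⨆ j, U j := by rw [hD.sup_eq_top]; trivial
  obtain ⟨f, hf, hsum⟩ := (Submodule.mem_iSup_iff_exists_finsupp U w).mp hwtop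
  have hz : ∀ j ∈ f.support, θ j • f j - μ • f j = 0 := by
    refine hD.sum_eq_zero _ f.support
      (fun j _ => sub_mem (Submodule.smul_mem _ _ (hf j)) (Submodule.smul_mem _ _ (hf j))) ?_
    have h1 : A w = ∑ j ∈ f.support, θ j • f j := by
      rw [← hsum, Finsupp.sum, map_sum]
      exact Finset.sum_congr rfl fun j _ => heig j (f j) (hf j)
    have h2 : μ • w = ∑ j ∈ f.support, μ • f j := by
      rw [← hsum, Finsupp.sum, Finset.smul_sum]
    rw [Finset.sum_sub_distrib, ← h1, ← h2, hw, sub_self]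
  have hfz : ∀ j : ℤ, j ≠ m → f j = 0 := by
    intro j hj
    by_cases hjs : j ∈ f.support
    · rcases lt_or_ge j 0 with h' | h'
      · have h5 := hf j; rw [hD.bot_of_lt j h'] at h5; simpa using h5
      rcases le_or_gt j (d : ℤ) with h'' | h''
      · have h3 := hz j hjs
        rw [← sub_smul] at h3
        rcases smul_eq_zero.mp h3 with h4 | h4
        · exact absurd (sub_eq_zero.mp h4) (hm j h' h'' hj)
        · exact h4
      · have h5 := hf j; rw [hD.bot_of_gt j h''] at h5; simpa using h5
    · exact Finsupp.notMem_support_iff.mp hjs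
  have hwm : w = f m := by
    rw [← hsum, Finsupp.sum]
    exact Finset.sum_eq_single m (fun j _ hj => hfz j hj)
      (fun h => Finsupp.notMem_support_iff.mp h)
  rw [hwm]
  exact hf m

lemma rev (hD : IsDecomposition d U) : IsDecomposition d (fun j => U ((d : ℤ) - j)) where
  bot_of_lt i hi := hD.bot_of_gt _ (by omega)
  bot_of_gt i hi := hD.bot_of_lt _ (by omega)
  ne_bot i h1 h2 := hD.ne_bot _ (by omega) (by omega)
  indep := hD.indep.comp (f := fun j => (d : ℤ) - j)
    (fun x y h => by have h' : (d : ℤ) - x = (d : ℤ) - y := h; omega)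
  sup_eq_top := by
    rw [← hD.sup_eq_top]
    apply le_antisymm
    · exact iSup_le fun j => le_iSup _ _
    · refine iSup_le fun j => ?_
      have h3 : U j = (fun j => U ((d : ℤ) - j)) ((d : ℤ) - j) := by
        simp only [sub_sub_cancel]
      rw [h3]
      exact le_iSup (fun j => U ((d : ℤ) - j)) _

end IsDecomposition

namespace IsTridiagonalPair

variable {A A' : Module.End K V} {d : ℕ} {Vs Vs' : ℤ → Submodule K V} {θ θ' : ℤ → K}

lemma revFst (h : IsTridiagonalPair A A' d Vs Vs' θ θ') :
    IsTridiagonalPair A A' d (fun j => Vs ((d : ℤ) - j)) Vs'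
      (fun j => θ ((d : ℤ) - j)) θ' where
  decompV := h.decompV.rev
  decompV' := h.decompV'
  eig i v hv := h.eig _ v hv
  eig' := h.eig'
  theta_inj i j h1 h2 h3 h4 he := by
    have := h.theta_inj _ _ (by omega) (by omega) (by omega) (by omega) he
    omega
  theta'_inj := h.theta'_inj
  trid i := by
    have e1 : (d : ℤ) - (i - 1) = (d : ℤ) - i + 1 := by omega
    have e2 : (d : ℤ) - (i + 1) = (d : ℤ) - i - 1 := by omega
    simp only [e1, e2]
    refine (h.trid ((d : ℤ) - i)).trans ?_
    exact sup_le (sup_le le_sup_right (le_sup_of_le_left le_sup_right))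
      (le_sup_of_le_left le_sup_left)
  trid' := h.trid'
  irred := h.irred

lemma revSnd (h : IsTridiagonalPair A A' d Vs Vs' θ θ') :
    IsTridiagonalPair A A' d Vs (fun j => Vs' ((d : ℤ) - j)) θ
      (fun j => θ' ((d : ℤ) - j)) where
  decompV := h.decompV
  decompV' := h.decompV'.rev
  eig := h.eig
  eig' i v hv := h.eig' _ v hv
  theta_inj := h.theta_inj
  theta'_inj i j h1 h2 h3 h4 he := by
    have := h.theta'_inj _ _ (by omega) (by omega) (by omega) (by omega) he
    omega
  trid := h.trid
  trid' i := by
    have e1 : (d : ℤ) - (i - 1) = (d : ℤ) - i + 1 := by omega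
    have e2 : (d : ℤ) - (i + 1) = (d : ℤ) - i - 1 := by omega
    simp only [e1, e2]
    refine (h.trid' ((d : ℤ) - i)).trans ?_
    exact sup_le (sup_le le_sup_right (le_sup_of_le_left le_sup_right))
      (le_sup_of_le_left le_sup_left)
  irred := h.irred

end IsTridiagonalPair

end Aux

section Split

variable {K : Type*} [Field K] {V : Type*} [AddCommGroup V] [Module K V]

/-- The split decomposition facts for a tridiagonal pair.  -/
theorem split_facts {A A' : Module.End K V} {d : ℕ} {Vs Vs' : ℤ → Submodule K V}
    {θ θ' : ℤ → K} (h : IsTridiagonalPair A A' d Vs Vs' θ θ') :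
    (∀ i : ℤ, sumIcc Vs i (d : ℤ) ≤ sumIcc (dec0sD d Vs Vs') i (d : ℤ)) ∧
    (∀ i : ℤ, sumIcc Vs' 0 i ≤ sumIcc (dec0sD d Vs Vs') 0 i) ∧
    (∀ i : ℤ, ∀ u ∈ dec0sD d Vs Vs' i,
      (A - θ i • 1) u ∈ dec0sD d Vs Vs' (i + 1)) ∧
    (∀ i : ℤ, ∀ u ∈ dec0sD d Vs Vs' i,
      (A' - θ' i • 1) u ∈ dec0sD d Vs Vs' (i - 1)) := by
  -- basic flag lemmas
  have hX' : ∀ m n : ℤ, m ≤ n → Vs' m ≤ sumIcc Vs' 0 n := by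
    intro m n hmn
    rcases lt_or_ge m 0 with hm | hm
    · rw [h.decompV'.bot_of_lt m hm]; exact bot_le
    · exact le_sumIcc hm hmn
  have hY' : ∀ m n : ℤ, n ≤ m → Vs m ≤ sumIcc Vs n (d : ℤ) := by
    intro m n hmn
    rcases le_or_gt m (d : ℤ) with hm | hm
    · exact le_sumIcc hmn hm
    · rw [h.decompV.bot_of_gt m hm]; exact bot_le
  have hXmono : ∀ m n : ℤ, m ≤ n → sumIcc Vs' 0 m ≤ sumIcc Vs' 0 n :=
    fun m n hmn => sumIcc_mono_idx le_rfl hmn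
  have hYmono : ∀ m n : ℤ, m ≤ n → sumIcc Vs n (d : ℤ) ≤ sumIcc Vs m (d : ℤ) :=
    fun m n hmn => sumIcc_mono_idx hmn le_rfl
  -- actions on flags
  have hAX : ∀ i : ℤ, ∀ v ∈ sumIcc Vs' 0 i, A v ∈ sumIcc Vs' 0 (i + 1) := by
    intro i
    refine sumIcc_apply_le A ?_
    intro j h0 hji v hv
    have h1 := h.trid' j ⟨v, hv, rfl⟩
    exact (sup_le (sup_le (hX' _ _ (by omega)) (hX' _ _ (by omega)))
      (hX' _ _ (by omega))) h1
  have hA'Y : ∀ i : ℤ, ∀ v ∈ sumIcc Vs i (d : ℤ), A' v ∈ sumIcc Vs (i - 1) (d : ℤ) := by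
    intro i
    refine sumIcc_apply_le A' ?_
    intro j hji hjd v hv
    have h1 := h.trid j ⟨v, hv, rfl⟩
    exact (sup_le (sup_le (hY' _ _ (by omega)) (hY' _ _ (by omega)))
      (hY' _ _ (by omega))) h1
  have hAY : ∀ i : ℤ, ∀ v ∈ sumIcc Vs i (d : ℤ),
      (A - θ i • 1) v ∈ sumIcc Vs (i + 1) (d : ℤ) := by
    intro i
    refine sumIcc_apply_le (A - θ i • 1) ?_
    intro j hji hjd v hv
    rw [end_sub_smul_one_apply, h.eig j v hv, ← sub_smul]
    rcases eq_or_lt_of_le hji with rfl | hlt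
    · rw [sub_self, zero_smul]; exact zero_mem _
    · exact Submodule.smul_mem _ _ (hY' j (i + 1) (by omega) hv)
  have hA'X : ∀ i : ℤ, ∀ v ∈ sumIcc Vs' 0 i,
      (A' - θ' i • 1) v ∈ sumIcc Vs' 0 (i - 1) := by
    intro i
    refine sumIcc_apply_le (A' - θ' i • 1) ?_
    intro j hj0 hji v hv
    rw [end_sub_smul_one_apply, h.eig' j v hv, ← sub_smul]
    rcases eq_or_lt_of_le hji with heq | hlt
    · subst heq; rw [sub_self, zero_smul]; exact zero_mem _
    · exact Submodule.smul_mem _ _ (hX' j (i - 1) (by omega) hv)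
  -- the intersections X i ⊓ Y (i+1) vanish
  have hZbot : ∀ i : ℤ, sumIcc Vs' 0 i ⊓ sumIcc Vs (i + 1) (d : ℤ) = ⊥ := by
    set Z : ℤ → Submodule K V := fun i => sumIcc Vs' 0 i ⊓ sumIcc Vs (i + 1) (d : ℤ)
      with hZdef
    have hZA : ∀ i : ℤ, ∀ z ∈ Z i, A z ∈ Z i ⊔ Z (i + 1) := by
      intro i z hz
      obtain ⟨hz1, hz2⟩ := hz
      have key : (A - θ (i + 1) • 1) z ∈ Z (i + 1) := by
        constructor
        · rw [end_sub_smul_one_apply]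
          exact sub_mem (hAX i z hz1)
            (Submodule.smul_mem _ _ (hXmono i (i + 1) (by omega) hz1))
        · exact hAY (i + 1) z hz2
      have hsplit : A z = θ (i + 1) • z + (A - θ (i + 1) • 1) z := by
        rw [end_sub_smul_one_apply]; abel
      rw [hsplit]
      exact Submodule.add_mem_sup (Submodule.smul_mem _ _ ⟨hz1, hz2⟩) key
    have hZA' : ∀ i : ℤ, ∀ z ∈ Z i, A' z ∈ Z (i - 1) ⊔ Z i := by
      intro i z hz
      obtain ⟨hz1, hz2⟩ := hz
      have key : (A' - θ' i • 1) z ∈ Z (i - 1) := by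
        constructor
        · exact hA'X i z hz1
        · rw [end_sub_smul_one_apply]
          have h1 : A' z ∈ sumIcc Vs ((i + 1) - 1) (d : ℤ) := hA'Y (i + 1) z hz2
          have e1 : (i + 1) - 1 = (i - 1) + 1 := by omega
          rw [sumIcc_congr_idx e1 rfl] at h1
          refine sub_mem h1 (Submodule.smul_mem _ _ ?_)
          exact sumIcc_mono_idx (by omega) le_rfl hz2
      have hsplit : A' z = (A' - θ' i • 1) z + θ' i • z := by
        rw [end_sub_smul_one_apply]; abel
      rw [hsplit]
      exact Submodule.add_mem_sup key (Submodule.smul_mem _ _ ⟨hz1, hz2⟩)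
    have hstab1 : Submodule.map A (⨆ i, Z i) ≤ ⨆ i, Z i := by
      rw [Submodule.map_iSup]
      refine iSup_le fun i => Submodule.map_le_iff_le_comap.mpr fun z hz => ?_
      exact (sup_le (le_iSup Z i) (le_iSup Z (i + 1))) (hZA i z hz)
    have hstab2 : Submodule.map A' (⨆ i, Z i) ≤ ⨆ i, Z i := by
      rw [Submodule.map_iSup]
      refine iSup_le fun i => Submodule.map_le_iff_le_comap.mpr fun z hz => ?_
      exact (sup_le (le_iSup Z (i - 1)) (le_iSup Z i)) (hZA' i z hz)
    have hbot : (⨆ i : ℤ, Z i) = ⊥ := by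
      rcases h.irred (⨆ i, Z i) hstab1 hstab2 with hb | ht
      · exact hb
      · exfalso
        have hle : (⨆ i : ℤ, Z i) ≤ sumIcc Vs 1 (d : ℤ) := by
          refine iSup_le fun i => ?_
          rcases lt_or_ge i 0 with hi | hi
          · refine le_trans inf_le_left ?_
            rw [sumIcc_bot hi]
            exact bot_le
          · exact le_trans inf_le_right (hYmono 1 (i + 1) (by omega))
        have hVs0 : Vs 0 ≤ sumIcc Vs 1 (d : ℤ) := le_trans le_top (ht ▸ hle)
        have hVs0' : Vs 0 ≤ ⨆ j, ⨆ (_ : j ≠ (0 : ℤ)), Vs j :=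
          hVs0.trans (sumIcc_le fun j h1 h2 =>
            le_iSup₂ (f := fun j _ => Vs j) j (by omega))
        exact h.decompV.ne_bot 0 le_rfl (by positivity)
          ((iSupIndep_def.mp h.decompV.indep 0).eq_bot_of_le hVs0')
    intro i
    exact le_bot_iff.mp ((le_iSup Z i).trans hbot.le)
  -- raising and lowering on the split subspaces
  have hraise : ∀ i : ℤ, ∀ u ∈ dec0sD d Vs Vs' i,
      (A - θ i • 1) u ∈ dec0sD d Vs Vs' (i + 1) := by
    intro i u hu
    obtain ⟨hu1, hu2⟩ := hu
    constructor
    · rw [end_sub_smul_one_apply]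
      exact sub_mem (hAX i u hu1)
        (Submodule.smul_mem _ _ (hXmono i (i + 1) (by omega) hu1))
    · exact hAY i u hu2
  have hlower : ∀ i : ℤ, ∀ u ∈ dec0sD d Vs Vs' i,
      (A' - θ' i • 1) u ∈ dec0sD d Vs Vs' (i - 1) := by
    intro i u hu
    obtain ⟨hu1, hu2⟩ := hu
    constructor
    · exact hA'X i u hu1
    · rw [end_sub_smul_one_apply]
      have h1 : A' u ∈ sumIcc Vs (i - 1) (d : ℤ) := hA'Y i u hu2
      exact sub_mem h1 (Submodule.smul_mem _ _ (sumIcc_mono_idx (by omega) le_rfl hu2))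
  -- the split subspaces sum to the whole space
  have hUstab1 : Submodule.map A (⨆ i, dec0sD d Vs Vs' i) ≤ ⨆ i, dec0sD d Vs Vs' i := by
    rw [Submodule.map_iSup]
    refine iSup_le fun i => Submodule.map_le_iff_le_comap.mpr fun u hu => ?_
    have hsplit : A u = θ i • u + (A - θ i • 1) u := by
      rw [end_sub_smul_one_apply]; abel
    have hAu : A u ∈ dec0sD d Vs Vs' i ⊔ dec0sD d Vs Vs' (i + 1) := by
      rw [hsplit]
      exact Submodule.add_mem_sup (Submodule.smul_mem _ _ hu) (hraise i u hu)
    exact (sup_le (le_iSup (dec0sD d Vs Vs') i) (le_iSup (dec0sD d Vs Vs') (i + 1))) hAu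
  have hUstab2 : Submodule.map A' (⨆ i, dec0sD d Vs Vs' i) ≤ ⨆ i, dec0sD d Vs Vs' i := by
    rw [Submodule.map_iSup]
    refine iSup_le fun i => Submodule.map_le_iff_le_comap.mpr fun u hu => ?_
    have hsplit : A' u = θ' i • u + (A' - θ' i • 1) u := by
      rw [end_sub_smul_one_apply]; abel
    have hAu : A' u ∈ dec0sD d Vs Vs' i ⊔ dec0sD d Vs Vs' (i - 1) := by
      rw [hsplit]
      exact Submodule.add_mem_sup (Submodule.smul_mem _ _ hu) (hlower i u hu)
    exact (sup_le (le_iSup (dec0sD d Vs Vs') i) (le_iSup (dec0sD d Vs Vs') (i - 1))) hAu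
  have hUtop : (⨆ i : ℤ, dec0sD d Vs Vs' i) = ⊤ := by
    rcases h.irred (⨆ i, dec0sD d Vs Vs' i) hUstab1 hUstab2 with hb | ht
    · exfalso
      have h1 : Vs' 0 ≤ dec0sD d Vs Vs' 0 :=
        le_inf (le_sumIcc le_rfl le_rfl)
          (le_trans le_top (h.decompV.top_le_sumIcc le_rfl le_rfl))
      have h2 : Vs' 0 ≤ ⊥ := h1.trans ((le_iSup (dec0sD d Vs Vs') 0).trans hb.le)
      exact h.decompV'.ne_bot 0 le_rfl (by positivity) (le_bot_iff.mp h2)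
    · exact ht
  have hUleX : ∀ j i : ℤ, j ≤ i → dec0sD d Vs Vs' j ≤ sumIcc Vs' 0 i :=
    fun j i hij => le_trans inf_le_left (hXmono _ _ hij)
  have hUleY : ∀ j i : ℤ, i ≤ j → dec0sD d Vs Vs' j ≤ sumIcc Vs i (d : ℤ) :=
    fun j i hij => le_trans inf_le_right (hYmono _ _ hij)
  have hUtop' : (⊤ : Submodule K V) ≤ sumIcc (dec0sD d Vs Vs') 0 (d : ℤ) := by
    rw [← hUtop]
    refine iSup_le fun j => ?_
    rcases lt_or_ge j 0 with hj | hj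
    · refine le_trans inf_le_left ?_
      rw [sumIcc_bot hj]; exact bot_le
    rcases le_or_gt j (d : ℤ) with hj' | hj'
    · exact le_sumIcc hj hj'
    · refine le_trans inf_le_right ?_
      rw [sumIcc_bot hj']; exact bot_le
  -- the two flag identities
  have hS_Y : ∀ i : ℤ, sumIcc Vs i (d : ℤ) ≤ sumIcc (dec0sD d Vs Vs') i (d : ℤ) := by
    intro i v hv
    have hv' : v ∈ sumIcc (dec0sD d Vs Vs') 0 (i - 1) ⊔
        sumIcc (dec0sD d Vs Vs') ((i - 1) + 1) (d : ℤ) :=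
      sumIcc_split (i - 1) (hUtop' trivial)
    rw [sumIcc_congr_idx (by omega : (i - 1) + 1 = i) rfl] at hv'
    rcases Submodule.mem_sup.mp hv' with ⟨p, hp, w, hw, rfl⟩
    have hpX : p ∈ sumIcc Vs' 0 (i - 1) :=
      sumIcc_le (fun j h1 h2 => hUleX j (i - 1) h2) hp
    have hwY : w ∈ sumIcc Vs i (d : ℤ) :=
      sumIcc_le (fun j h1 h2 => hUleY j i h1) hw
    have hpY : p ∈ sumIcc Vs ((i - 1) + 1) (d : ℤ) := by
      rw [sumIcc_congr_idx (by omega : (i - 1) + 1 = i) rfl]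
      have : p = (p + w) - w := by abel
      rw [this]; exact sub_mem hv hwY
    have hp0 : p = 0 := by
      have hmem : p ∈ sumIcc Vs' 0 (i - 1) ⊓ sumIcc Vs ((i - 1) + 1) (d : ℤ) := ⟨hpX, hpY⟩
      rw [hZbot (i - 1)] at hmem
      simpa using hmem
    rw [hp0, zero_add]
    exact hw
  have hS_X : ∀ i : ℤ, sumIcc Vs' 0 i ≤ sumIcc (dec0sD d Vs Vs') 0 i := by
    intro i v hv
    have hv' : v ∈ sumIcc (dec0sD d Vs Vs') 0 i ⊔
        sumIcc (dec0sD d Vs Vs') (i + 1) (d : ℤ) :=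
      sumIcc_split i (hUtop' trivial)
    rcases Submodule.mem_sup.mp hv' with ⟨p, hp, w, hw, rfl⟩
    have hpX : p ∈ sumIcc Vs' 0 i :=
      sumIcc_le (fun j h1 h2 => hUleX j i h2) hp
    have hwY : w ∈ sumIcc Vs (i + 1) (d : ℤ) :=
      sumIcc_le (fun j h1 h2 => hUleY j (i + 1) h1) hw
    have hwX : w ∈ sumIcc Vs' 0 i := by
      have : w = (p + w) - p := by abel
      rw [this]; exact sub_mem hv hpX
    have hw0 : w = 0 := by
      have hmem : w ∈ sumIcc Vs' 0 i ⊓ sumIcc Vs (i + 1) (d : ℤ) := ⟨hwX, hwY⟩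
      rw [hZbot i] at hmem
      simpa using hmem
    rw [hw0, add_zero]
    exact hp
  exact ⟨hS_Y, hS_X, hraise, hlower⟩

end Split
/-- the actions of `K` and `K⁻¹` on the six decompositions. -/
theorem stmt10 {K : Type*} [Field K] [IsAlgClosed K]
    {V : Type*} [AddCommGroup V] [Module K V] [FiniteDimensional K V] [Nontrivial V]
    (q : K) (hq0 : q ≠ 0) (hq : ∀ n : ℕ, 0 < n → q ^ n ≠ 1)
    (A A' : Module.End K V) (d : ℕ) (Vs Vs' : ℤ → Submodule K V) (θ θ' : ℤ → K)
    (hTD : IsTridiagonalPair A A' d Vs Vs' θ θ')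
    (a a' : K) (ha : a ≠ 0) (ha' : a' ≠ 0)
    (hθ : ∀ i : ℤ, 0 ≤ i → i ≤ (d : ℤ) → θ i = a * q ^ (2 * i - (d : ℤ)))
    (hθ' : ∀ i : ℤ, 0 ≤ i → i ≤ (d : ℤ) → θ' i = a' * q ^ ((d : ℤ) - 2 * i))
    (b b' : K) (hb : b ≠ 0) (hb' : b' ≠ 0)
    (B : Module.End K V)
    (hB : ∀ i : ℤ, 0 ≤ i → i ≤ (d : ℤ) → ∀ v ∈ dec0s0 d Vs Vs' i,
      B v = (b * q ^ (2 * i - (d : ℤ))) • v)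
    (B' : Module.End K V)
    (hB' : ∀ i : ℤ, 0 ≤ i → i ≤ (d : ℤ) → ∀ v ∈ decDsD d Vs Vs' i,
      B' v = (b' * q ^ ((d : ℤ) - 2 * i)) • v)
    (Kop : Module.End K V)
    (hKop : ∀ i : ℤ, 0 ≤ i → i ≤ (d : ℤ) → ∀ v ∈ dec0sD d Vs Vs' i,
      Kop v = (q ^ (2 * i - (d : ℤ))) • v)
    (Ks : Module.End K V)
    (hKs : ∀ i : ℤ, 0 ≤ i → i ≤ (d : ℤ) → ∀ v ∈ decDs0 d Vs Vs' i,
      Ks v = (q ^ (2 * i - (d : ℤ))) • v)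
    (Kinv Ksinv : Module.End K V)
    (hKinv1 : Kop * Kinv = 1) (hKinv2 : Kinv * Kop = 1)
    (hKsinv1 : Ks * Ksinv = 1) (hKsinv2 : Ksinv * Ks = 1)
    :
    ∀ i : ℤ, 0 ≤ i → i ≤ (d : ℤ) →
      -- [0D]
      (Submodule.map (Kop - q ^ (2 * i - (d : ℤ)) • 1) (dec0D Vs i) ≤
          sumIcc (dec0D Vs) (i + 1) (d : ℤ) ∧
        Submodule.map (Kinv - q ^ ((d : ℤ) - 2 * i) • 1) (dec0D Vs i) ≤ dec0D Vs (i + 1)) ∧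
      -- [0*D*]
      (Submodule.map (Kop - q ^ (2 * i - (d : ℤ)) • 1) (dec0sDs Vs' i) ≤ dec0sDs Vs' (i - 1) ∧
        Submodule.map (Kinv - q ^ ((d : ℤ) - 2 * i) • 1) (dec0sDs Vs' i) ≤
          sumIcc (dec0sDs Vs') 0 (i - 1)) ∧
      -- [0*D]
      (Submodule.map (Kop - q ^ (2 * i - (d : ℤ)) • 1) (dec0sD d Vs Vs' i) = ⊥ ∧
        Submodule.map (Kinv - q ^ ((d : ℤ) - 2 * i) • 1) (dec0sD d Vs Vs' i) = ⊥) ∧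
      -- [0*0]
      (Submodule.map (Kop - q ^ (2 * i - (d : ℤ)) • 1) (dec0s0 d Vs Vs' i) ≤
          sumIcc (dec0s0 d Vs Vs') 0 (i - 1) ∧
        Submodule.map (Kinv - q ^ ((d : ℤ) - 2 * i) • 1) (dec0s0 d Vs Vs' i) ≤
          dec0s0 d Vs Vs' (i - 1)) ∧
      -- [D*0]
      (Submodule.map Kop (decDs0 d Vs Vs' i) ≤ sumIcc (decDs0 d Vs Vs') 0 (i + 1) ∧
        Submodule.map Kinv (decDs0 d Vs Vs' i) ≤ sumIcc (decDs0 d Vs Vs') (i - 1) (d : ℤ)) ∧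
      -- [D*D]
      (Submodule.map (Kop - q ^ (2 * i - (d : ℤ)) • 1) (decDsD d Vs Vs' i) ≤
          decDsD d Vs Vs' (i + 1) ∧
        Submodule.map (Kinv - q ^ ((d : ℤ) - 2 * i) • 1) (decDsD d Vs Vs' i) ≤
          sumIcc (decDsD d Vs Vs') (i + 1) (d : ℤ)) := by
  classical
  -- scalar helpers
  have hqmul : ∀ m n p : ℤ, m + n = p → q ^ m * q ^ n = q ^ p := fun m n p hp => by
    rw [← zpow_add₀ hq0, hp]
  have hqpow : ∀ m n : ℤ, m + n = 0 → q ^ m * q ^ n = 1 := fun m n hmn => by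
    rw [hqmul m n 0 hmn, zpow_zero]
  have hqinv : q * q⁻¹ = 1 := mul_inv_cancel₀ hq0
  have hq2 : q ^ (2 : ℤ) = q * q := by
    rw [(by norm_num : (2 : ℤ) = 1 + 1), zpow_add₀ hq0, zpow_one]
  have hqqmul : ∀ m p : ℤ, 2 + m = p → q * q * q ^ m = q ^ p := fun m p hp => by
    rw [← hq2, hqmul 2 m p hp]
  have qpow_inj : ∀ m n : ℤ, q ^ m = q ^ n → m = n := by
    intro m n hmn
    by_contra hne
    have key : ∀ p : ℤ, 0 < p → q ^ p = (1 : K) → False := by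
      intro p hp h1
      have h2 : q ^ p.toNat = (1 : K) := by
        rw [← zpow_natCast, Int.toNat_of_nonneg hp.le]; exact h1
      exact hq p.toNat (by omega) h2
    have h1 : q ^ (m - n) = (1 : K) := by
      rw [zpow_sub₀ hq0, hmn, div_self (zpow_ne_zero _ hq0)]
    rcases lt_or_gt_of_ne (sub_ne_zero.mpr hne) with hl | hg
    · have h2 : q ^ (n - m) = (1 : K) := by
        have e : n - m = -(m - n) := by ring
        rw [e, zpow_neg, h1, inv_one]
      exact key _ (by omega) h2
    · exact key _ hg h1
  -- identification of the reversed split decompositions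
  have hdec1 : dec0sD d (fun j => Vs ((d : ℤ) - j)) Vs' = dec0s0 d Vs Vs' := by
    funext i
    show sumIcc Vs' 0 i ⊓ sumIcc (fun j => Vs ((d : ℤ) - j)) i (d : ℤ) = _
    rw [sumIcc_rev, sub_self]
    rfl
  have hdec2 : dec0sD d Vs (fun j => Vs' ((d : ℤ) - j)) = decDsD d Vs Vs' := by
    funext i
    show sumIcc (fun j => Vs' ((d : ℤ) - j)) 0 i ⊓ sumIcc Vs i (d : ℤ) = _
    rw [sumIcc_rev, sub_zero]
    rfl
  have hdec3 : dec0sD d (fun j => Vs ((d : ℤ) - j)) (fun j => Vs' ((d : ℤ) - j)) =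
      decDs0 d Vs Vs' := by
    funext i
    show sumIcc (fun j => Vs' ((d : ℤ) - j)) 0 i ⊓
        sumIcc (fun j => Vs ((d : ℤ) - j)) i (d : ℤ) = _
    rw [sumIcc_rev, sumIcc_rev, sub_zero, sub_self]
    rfl
  -- the four split decompositions
  obtain ⟨hS_Y, hS_X, hraise, hlower⟩ := split_facts hTD
  obtain ⟨hS1_Y, hS1_X, -, -⟩ := split_facts hTD.revFst
  obtain ⟨hS2_Y, hS2_X, -, -⟩ := split_facts hTD.revSnd
  obtain ⟨hS3_Y, hS3_X, -, -⟩ := split_facts hTD.revFst.revSnd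
  rw [hdec1] at hS1_Y hS1_X
  rw [hdec2] at hS2_Y hS2_X
  rw [hdec3] at hS3_Y hS3_X
  simp only [sumIcc_rev, sub_self, sub_zero] at hS1_Y hS2_X hS3_Y hS3_X
  -- hS1_Y : ∀ i, sumIcc Vs 0 (d - i) ≤ sumIcc (dec0s0 d Vs Vs') i d
  -- hS1_X : ∀ i, sumIcc Vs' 0 i ≤ sumIcc (dec0s0 d Vs Vs') 0 i
  -- hS2_Y : ∀ i, sumIcc Vs i d ≤ sumIcc (decDsD d Vs Vs') i d
  -- hS2_X : ∀ i, sumIcc Vs' (d - i) d ≤ sumIcc (decDsD d Vs Vs') 0 i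
  -- hS3_Y : ∀ i, sumIcc Vs 0 (d - i) ≤ sumIcc (decDs0 d Vs Vs') i d
  -- hS3_X : ∀ i, sumIcc Vs' (d - i) d ≤ sumIcc (decDs0 d Vs Vs') 0 i
  -- diagonal action of Kinv on the split decomposition
  have hUinv : ∀ j : ℤ, 0 ≤ j → j ≤ (d : ℤ) → ∀ u ∈ dec0sD d Vs Vs' j,
      Kinv u = q ^ ((d : ℤ) - 2 * j) • u := by
    intro j h1 h2 u hu
    have h3 := hKop j h1 h2 u hu
    have h4 : Kinv (Kop u) = u := by
      rw [← Module.End.mul_apply, hKinv2, Module.End.one_apply]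
    rw [h3, map_smul] at h4
    calc Kinv u = (q ^ ((d : ℤ) - 2 * j) * q ^ (2 * j - (d : ℤ))) • Kinv u := by
          rw [hqpow _ _ (by omega), one_smul]
      _ = q ^ ((d : ℤ) - 2 * j) • (q ^ (2 * j - (d : ℤ)) • Kinv u) := by rw [mul_smul]
      _ = q ^ ((d : ℤ) - 2 * j) • u := by rw [h4]
  have hUbotlt : ∀ j : ℤ, j < 0 → dec0sD d Vs Vs' j = ⊥ := fun j hj =>
    le_bot_iff.mp (le_trans inf_le_left (le_of_eq (sumIcc_bot hj)))
  have hUbotgt : ∀ j : ℤ, (d : ℤ) < j → dec0sD d Vs Vs' j = ⊥ := fun j hj =>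
    le_bot_iff.mp (le_trans inf_le_right (le_of_eq (sumIcc_bot hj)))
  -- generic lemma about diagonal operators w.r.t. the split decomposition
  have hdiag : ∀ (F : Module.End K V) (e : ℤ → K),
      (∀ j : ℤ, 0 ≤ j → j ≤ (d : ℤ) → ∀ u ∈ dec0sD d Vs Vs' j, F u = e j • u) →
      ∀ i : ℤ, 0 ≤ i → i ≤ (d : ℤ) →
      (∀ v ∈ sumIcc (dec0sD d Vs Vs') i (d : ℤ),
        (F - e i • 1) v ∈ sumIcc (dec0sD d Vs Vs') (i + 1) (d : ℤ)) ∧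
      (∀ v ∈ sumIcc (dec0sD d Vs Vs') 0 i,
        (F - e i • 1) v ∈ sumIcc (dec0sD d Vs Vs') 0 (i - 1)) := by
    intro F e hF i h0 hd2
    constructor
    · refine sumIcc_apply_le _ ?_
      intro j h1 h2 v hv
      rw [end_sub_smul_one_apply, hF j (by omega) h2 v hv, ← sub_smul]
      rcases eq_or_lt_of_le h1 with heq | hlt
      · rw [heq, sub_self, zero_smul]; exact zero_mem _
      · exact Submodule.smul_mem _ _ ((le_sumIcc (by omega) h2) hv)
    · refine sumIcc_apply_le _ ?_
      intro j h1 h2 v hv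
      rw [end_sub_smul_one_apply, hF j h1 (by omega) v hv, ← sub_smul]
      rcases eq_or_lt_of_le h2 with heq | hlt
      · rw [heq, sub_self, zero_smul]; exact zero_mem _
      · exact Submodule.smul_mem _ _ ((le_sumIcc h1 (by omega)) hv)
  have hUtop : (⊤ : Submodule K V) ≤ sumIcc (dec0sD d Vs Vs') 0 (d : ℤ) :=
    le_trans (hTD.decompV.top_le_sumIcc le_rfl le_rfl) (hS_Y 0)
  -- the operator identity for A and Kinv
  have hLA : ∀ v : V, A (Kinv v) =
      (q * q) • Kinv (A v) - (q * a * (q - q⁻¹)) • v := by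
    have hker : (⊤ : Submodule K V) ≤ LinearMap.ker
        (A * Kinv - (q * q) • (Kinv * A) + (q * a * (q - q⁻¹)) • (1 : Module.End K V)) := by
      refine le_trans hUtop (sumIcc_le ?_)
      intro j h1 h2 u hu
      rw [LinearMap.mem_ker]
      obtain ⟨r, hrm, hre⟩ : ∃ r, r ∈ dec0sD d Vs Vs' (j + 1) ∧ A u = θ j • u + r := by
        refine ⟨A u - θ j • u, ?_, by abel⟩
        have := hraise j u hu
        rwa [end_sub_smul_one_apply] at this
      have hKu : Kinv u = q ^ ((d : ℤ) - 2 * j) • u := hUinv j h1 h2 u hu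
      have hKr : (q * q) • Kinv r = q ^ ((d : ℤ) - 2 * j) • r := by
        rcases le_or_gt (j + 1) (d : ℤ) with hj | hj
        · rw [hUinv (j + 1) (by omega) hj r hrm, smul_smul,
            hqqmul ((d : ℤ) - 2 * (j + 1)) ((d : ℤ) - 2 * j) (by omega)]
        · have hr0 : r = 0 := by
            rw [hUbotgt (j + 1) hj] at hrm
            simpa using hrm
          rw [hr0]; simp
      have expand : (A * Kinv - (q * q) • (Kinv * A) +
            (q * a * (q - q⁻¹)) • (1 : Module.End K V)) u
          = A (Kinv u) - (q * q) • Kinv (A u) + (q * a * (q - q⁻¹)) • u := by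
        simp [LinearMap.add_apply, LinearMap.sub_apply, LinearMap.smul_apply,
          Module.End.mul_apply, Module.End.one_apply]
      rw [expand, hKu, map_smul, hre, map_add, map_smul, hKu]
      simp only [smul_add]
      rw [hKr, hθ j (by omega) h2]
      have hxy : q ^ (2 * j - (d : ℤ)) * q ^ ((d : ℤ) - 2 * j) = 1 := hqpow _ _ (by omega)
      match_scalars
      · linear_combination (a - a * q * q) * hxy - a * hqinv
      · ring
    intro v
    have h5 : A (Kinv v) - (q * q) • Kinv (A v) + (q * a * (q - q⁻¹)) • v = 0 := by
      have h6 := hker (Submodule.mem_top (x := v))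
      rw [LinearMap.mem_ker] at h6
      rw [← h6]
      simp [LinearMap.add_apply, LinearMap.sub_apply, LinearMap.smul_apply,
        Module.End.mul_apply, Module.End.one_apply]
    have h7 : A (Kinv v) - ((q * q) • Kinv (A v) - (q * a * (q - q⁻¹)) • v) = 0 := by
      rw [← h5]; abel
    exact sub_eq_zero.mp h7
  -- the operator identity for A' and Kop
  have hLA' : ∀ v : V, A' (Kop v) =
      (q * q) • Kop (A' v) - (q * a' * (q - q⁻¹)) • v := by
    have hker : (⊤ : Submodule K V) ≤ LinearMap.ker
        (A' * Kop - (q * q) • (Kop * A') + (q * a' * (q - q⁻¹)) • (1 : Module.End K V)) := by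
      refine le_trans hUtop (sumIcc_le ?_)
      intro j h1 h2 u hu
      rw [LinearMap.mem_ker]
      obtain ⟨r, hrm, hre⟩ : ∃ r, r ∈ dec0sD d Vs Vs' (j - 1) ∧ A' u = θ' j • u + r := by
        refine ⟨A' u - θ' j • u, ?_, by abel⟩
        have := hlower j u hu
        rwa [end_sub_smul_one_apply] at this
      have hKu : Kop u = q ^ (2 * j - (d : ℤ)) • u := hKop j h1 h2 u hu
      have hKr : (q * q) • Kop r = q ^ (2 * j - (d : ℤ)) • r := by
        rcases le_or_gt 0 (j - 1) with hj | hj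
        · rw [hKop (j - 1) hj (by omega) r hrm, smul_smul,
            hqqmul (2 * (j - 1) - (d : ℤ)) (2 * j - (d : ℤ)) (by omega)]
        · have hr0 : r = 0 := by
            rw [hUbotlt (j - 1) hj] at hrm
            simpa using hrm
          rw [hr0]; simp
      have expand : (A' * Kop - (q * q) • (Kop * A') +
            (q * a' * (q - q⁻¹)) • (1 : Module.End K V)) u
          = A' (Kop u) - (q * q) • Kop (A' u) + (q * a' * (q - q⁻¹)) • u := by
        simp [LinearMap.add_apply, LinearMap.sub_apply, LinearMap.smul_apply,
          Module.End.mul_apply, Module.End.one_apply]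
      rw [expand, hKu, map_smul, hre, map_add, map_smul, hKu]
      simp only [smul_add]
      rw [hKr, hθ' j h1 h2]
      have hxy : q ^ ((d : ℤ) - 2 * j) * q ^ (2 * j - (d : ℤ)) = 1 := hqpow _ _ (by omega)
      match_scalars
      · linear_combination (a' - a' * q * q) * hxy - a' * hqinv
      · ring
    intro v
    have h5 : A' (Kop v) - (q * q) • Kop (A' v) + (q * a' * (q - q⁻¹)) • v = 0 := by
      have h6 := hker (Submodule.mem_top (x := v))
      rw [LinearMap.mem_ker] at h6
      rw [← h6]
      simp [LinearMap.add_apply, LinearMap.sub_apply, LinearMap.smul_apply,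
        Module.End.mul_apply, Module.End.one_apply]
    have h7 : A' (Kop v) - ((q * q) • Kop (A' v) - (q * a' * (q - q⁻¹)) • v) = 0 := by
      rw [← h5]; abel
    exact sub_eq_zero.mp h7
  -- action of Kinv on eigenspaces of A
  have h0D2 : ∀ i : ℤ, 0 ≤ i → i ≤ (d : ℤ) → ∀ v ∈ Vs i,
      (Kinv - q ^ ((d : ℤ) - 2 * i) • 1) v ∈ Vs (i + 1) := by
    intro i h0 hd2 v hv
    rw [end_sub_smul_one_apply]
    have hAv : A v = θ i • v := hTD.eig i v hv
    have hAw : A (Kinv v - q ^ ((d : ℤ) - 2 * i) • v)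
        = (q * q * θ i) • (Kinv v - q ^ ((d : ℤ) - 2 * i) • v) := by
      rw [map_sub, map_smul, hLA v, hAv, map_smul]
      rw [hθ i h0 hd2]
      have hxy : q ^ (2 * i - (d : ℤ)) * q ^ ((d : ℤ) - 2 * i) = 1 := hqpow _ _ (by omega)
      match_scalars
      · ring
      · linear_combination (a * q * q - a) * hxy + a * hqinv
    refine hTD.decompV.eig_mem hTD.eig hAw (i + 1) (fun j hj0 hjd hne heq => hne ?_)
    rw [hθ j hj0 hjd, hθ i h0 hd2] at heq
    have e1 : q * q * (a * q ^ (2 * i - (d : ℤ))) = a * q ^ (2 * (i + 1) - (d : ℤ)) := by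
      rw [show q * q * (a * q ^ (2 * i - (d : ℤ))) = a * (q * q * q ^ (2 * i - (d : ℤ))) by ring,
        hqqmul (2 * i - (d : ℤ)) (2 * (i + 1) - (d : ℤ)) (by omega)]
    rw [e1] at heq
    have := qpow_inj _ _ (mul_left_cancel₀ ha heq)
    omega
  -- action of Kop on eigenspaces of A'
  have h0sDs1 : ∀ i : ℤ, 0 ≤ i → i ≤ (d : ℤ) → ∀ v ∈ Vs' i,
      (Kop - q ^ (2 * i - (d : ℤ)) • 1) v ∈ Vs' (i - 1) := by
    intro i h0 hd2 v hv
    rw [end_sub_smul_one_apply]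
    have hAv : A' v = θ' i • v := hTD.eig' i v hv
    have hAw : A' (Kop v - q ^ (2 * i - (d : ℤ)) • v)
        = (q * q * θ' i) • (Kop v - q ^ (2 * i - (d : ℤ)) • v) := by
      rw [map_sub, map_smul, hLA' v, hAv, map_smul]
      rw [hθ' i h0 hd2]
      have hxy : q ^ ((d : ℤ) - 2 * i) * q ^ (2 * i - (d : ℤ)) = 1 := hqpow _ _ (by omega)
      match_scalars
      · ring
      · linear_combination (a' * q * q - a') * hxy + a' * hqinv
    refine hTD.decompV'.eig_mem hTD.eig' hAw (i - 1) (fun j hj0 hjd hne heq => hne ?_)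
    rw [hθ' j hj0 hjd, hθ' i h0 hd2] at heq
    have e1 : q * q * (a' * q ^ ((d : ℤ) - 2 * i)) =
        a' * q ^ ((d : ℤ) - 2 * (i - 1)) := by
      rw [show q * q * (a' * q ^ ((d : ℤ) - 2 * i)) = a' * (q * q * q ^ ((d : ℤ) - 2 * i)) by ring,
        hqqmul ((d : ℤ) - 2 * i) ((d : ℤ) - 2 * (i - 1)) (by omega)]
    rw [e1] at heq
    have := qpow_inj _ _ (mul_left_cancel₀ ha' heq)
    omega
  -- consequences for flags
  have hKinvVs : ∀ j : ℤ, ∀ v ∈ Vs j, Kinv v ∈ Vs j ⊔ Vs (j + 1) := by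
    intro j v hv
    rcases lt_or_ge j 0 with hj | hj
    · rw [hTD.decompV.bot_of_lt j hj] at hv
      have hv0 : v = 0 := by simpa using hv
      rw [hv0, map_zero]
      exact zero_mem _
    rcases le_or_gt j (d : ℤ) with hj' | hj'
    · have h1 := h0D2 j hj hj' v hv
      rw [end_sub_smul_one_apply] at h1
      have h2 : Kinv v = q ^ ((d : ℤ) - 2 * j) • v + (Kinv v - q ^ ((d : ℤ) - 2 * j) • v) := by
        abel
      rw [h2]
      exact Submodule.add_mem_sup (Submodule.smul_mem _ _ hv) h1
    · rw [hTD.decompV.bot_of_gt j hj'] at hv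
      have hv0 : v = 0 := by simpa using hv
      rw [hv0, map_zero]
      exact zero_mem _
  have hKopVs' : ∀ j : ℤ, ∀ v ∈ Vs' j, Kop v ∈ Vs' (j - 1) ⊔ Vs' j := by
    intro j v hv
    rcases lt_or_ge j 0 with hj | hj
    · rw [hTD.decompV'.bot_of_lt j hj] at hv
      have hv0 : v = 0 := by simpa using hv
      rw [hv0, map_zero]
      exact zero_mem _
    rcases le_or_gt j (d : ℤ) with hj' | hj'
    · have h1 := h0sDs1 j hj hj' v hv
      rw [end_sub_smul_one_apply] at h1
      have h2 : Kop v = (Kop v - q ^ (2 * j - (d : ℤ)) • v) + q ^ (2 * j - (d : ℤ)) • v := by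
        abel
      rw [h2]
      exact Submodule.add_mem_sup h1 (Submodule.smul_mem _ _ hv)
    · rw [hTD.decompV'.bot_of_gt j hj'] at hv
      have hv0 : v = 0 := by simpa using hv
      rw [hv0, map_zero]
      exact zero_mem _
  have hKinvP : ∀ m : ℤ, ∀ v ∈ sumIcc Vs 0 m, Kinv v ∈ sumIcc Vs 0 (m + 1) := by
    intro m
    refine sumIcc_apply_le Kinv (fun j h1 h2 v hv => ?_)
    exact (sup_le (le_sumIcc h1 (by omega)) (le_sumIcc (by omega) (by omega)) :
      Vs j ⊔ Vs (j + 1) ≤ sumIcc Vs 0 (m + 1))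
      (hKinvVs j v hv)
  have hKopXt : ∀ m : ℤ, ∀ v ∈ sumIcc Vs' m (d : ℤ), Kop v ∈ sumIcc Vs' (m - 1) (d : ℤ) := by
    intro m
    refine sumIcc_apply_le Kop (fun j h1 h2 v hv => ?_)
    exact (sup_le (le_sumIcc (by omega) (by omega)) (le_sumIcc (by omega) h2) :
      Vs' (j - 1) ⊔ Vs' j ≤ sumIcc Vs' (m - 1) (d : ℤ))
      (hKopVs' j v hv)
  -- useful inclusions of the split decomposition pieces into flags
  have hUY : ∀ m : ℤ, sumIcc (dec0sD d Vs Vs') m (d : ℤ) ≤ sumIcc Vs m (d : ℤ) :=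
    fun m => sumIcc_le fun j h1 h2 => inf_le_right.trans (sumIcc_mono_idx h1 le_rfl)
  have hUX : ∀ m : ℤ, sumIcc (dec0sD d Vs Vs') 0 m ≤ sumIcc Vs' 0 m :=
    fun m => sumIcc_le fun j h1 h2 => inf_le_left.trans (sumIcc_mono_idx le_rfl h2)
  -- ====== the main statements ======
  intro i h0 hd2
  have hKdiag := hdiag Kop (fun j => q ^ (2 * j - (d : ℤ))) hKop i h0 hd2
  have hKinvdiag := hdiag Kinv (fun j => q ^ ((d : ℤ) - 2 * j)) hUinv i h0 hd2
  refine ⟨⟨?_, ?_⟩, ⟨?_, ?_⟩, ⟨?_, ?_⟩, ⟨?_, ?_⟩, ⟨?_, ?_⟩, ⟨?_, ?_⟩⟩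
  -- [0D] part 1
  · rintro x ⟨v, hv, rfl⟩
    have h1 : v ∈ sumIcc (dec0sD d Vs Vs') i (d : ℤ) :=
      hS_Y i ((le_sumIcc le_rfl hd2 : Vs i ≤ _) hv)
    exact hUY (i + 1) (hKdiag.1 v h1)
  -- [0D] part 2
  · rintro x ⟨v, hv, rfl⟩
    exact h0D2 i h0 hd2 v hv
  -- [0*D*] part 1
  · rintro x ⟨v, hv, rfl⟩
    exact h0sDs1 i h0 hd2 v hv
  -- [0*D*] part 2
  · rintro x ⟨v, hv, rfl⟩
    have h1 : v ∈ sumIcc (dec0sD d Vs Vs') 0 i :=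
      hS_X i ((le_sumIcc h0 le_rfl : Vs' i ≤ _) hv)
    exact hUX (i - 1) (hKinvdiag.2 v h1)
  -- [0*D] part 1
  · rw [eq_bot_iff]
    rintro x ⟨v, hv, rfl⟩
    rw [Submodule.mem_bot, end_sub_smul_one_apply, hKop i h0 hd2 v hv, sub_self]
  -- [0*D] part 2
  · rw [eq_bot_iff]
    rintro x ⟨v, hv, rfl⟩
    rw [Submodule.mem_bot, end_sub_smul_one_apply, hUinv i h0 hd2 v hv, sub_self]
  -- [0*0] part 1
  · rintro x ⟨v, hv, rfl⟩
    have h1 : v ∈ sumIcc (dec0sD d Vs Vs') 0 i := hS_X i hv.1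
    exact hS1_X (i - 1) (hUX (i - 1) (hKdiag.2 v h1))
  -- [0*0] part 2
  · rintro x ⟨v, hv, rfl⟩
    rw [end_sub_smul_one_apply]
    constructor
    · -- X component
      have h1 : v ∈ sumIcc (dec0sD d Vs Vs') 0 i := hS_X i hv.1
      have h2 := hKinvdiag.2 v h1
      rw [end_sub_smul_one_apply] at h2
      exact hUX (i - 1) h2
    · -- Y component
      have h1 : Kinv v ∈ sumIcc Vs 0 ((d : ℤ) - i + 1) := hKinvP ((d : ℤ) - i) v hv.2
      have h2 : q ^ ((d : ℤ) - 2 * i) • v ∈ sumIcc Vs 0 ((d : ℤ) - i + 1) :=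
        Submodule.smul_mem _ _ (sumIcc_mono_idx le_rfl (by omega) hv.2)
      have h3 := sub_mem h1 h2
      rwa [sumIcc_congr_idx rfl (by omega : (d : ℤ) - i + 1 = (d : ℤ) - (i - 1))] at h3
  -- [D*0] part 1
  · rintro x ⟨v, hv, rfl⟩
    have h1 : Kop v ∈ sumIcc Vs' ((d : ℤ) - i - 1) (d : ℤ) := hKopXt ((d : ℤ) - i) v hv.1
    rw [sumIcc_congr_idx (by omega : (d : ℤ) - i - 1 = (d : ℤ) - (i + 1)) rfl] at h1
    exact hS3_X (i + 1) h1
  -- [D*0] part 2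
  · rintro x ⟨v, hv, rfl⟩
    have h1 : Kinv v ∈ sumIcc Vs 0 ((d : ℤ) - i + 1) := hKinvP ((d : ℤ) - i) v hv.2
    rw [sumIcc_congr_idx rfl (by omega : (d : ℤ) - i + 1 = (d : ℤ) - (i - 1))] at h1
    exact hS3_Y (i - 1) h1
  -- [D*D] part 1
  · rintro x ⟨v, hv, rfl⟩
    rw [end_sub_smul_one_apply]
    constructor
    · -- X component
      have h1 : Kop v ∈ sumIcc Vs' ((d : ℤ) - i - 1) (d : ℤ) := hKopXt ((d : ℤ) - i) v hv.1
      have h2 : q ^ (2 * i - (d : ℤ)) • v ∈ sumIcc Vs' ((d : ℤ) - i - 1) (d : ℤ) :=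
        Submodule.smul_mem _ _ (sumIcc_mono_idx (by omega) le_rfl hv.1)
      have h3 := sub_mem h1 h2
      rwa [sumIcc_congr_idx (by omega : (d : ℤ) - i - 1 = (d : ℤ) - (i + 1)) rfl] at h3
    · -- Y component
      have h1 : v ∈ sumIcc (dec0sD d Vs Vs') i (d : ℤ) := hS_Y i hv.2
      have h2 := hKdiag.1 v h1
      rw [end_sub_smul_one_apply] at h2
      exact hUY (i + 1) h2
  -- [D*D] part 2
  · rintro x ⟨v, hv, rfl⟩
    have h1 : v ∈ sumIcc (dec0sD d Vs Vs') i (d : ℤ) := hS_Y i hv.2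
    exact hS2_Y (i + 1) (hUY (i + 1) (hKinvdiag.1 v h1))
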